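/- Fix r ∈ (0,1), let b(z) = (z − r)/(1 − rz), and define G(z) = (1/√2)(z², b(z)²) ∈ C². Then: (i) ‖G(z)‖ < 1 for every z in the open unit disc D, i.e., G maps D into the open unit ball B_2 of C²; (ii) G is injective on D; (iii) G extends to a map holomorphic in a neighborhood of the closed unit disc (since the only pole 1/r of b lies outside), and the extension satisfies G(1) = G(−1) = (1/√2)(1, 1). -/

import Mathlib

open Metric

/-- For `r ∈ (0,1)`, `b(z) = (z−r)/(1−rz)` and `G(z) = (z²/√2, b(z)²/√2)`:
(i) `G` maps the open unit disc into the open unit ball of `ℂ²`; (ii) `G` is injective on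
the disc; (iii) `G` extends holomorphically to a neighborhood of the closed disc, with
`G(1) = G(−1) = (1/√2)(1,1)`. -/
theorem twisted_disc_embedding (r : ℝ) (hr0 : 0 < r) (hr1 : r < 1)
    (b : ℂ → ℂ) (hbdef : ∀ z : ℂ, b z = (z - (r : ℂ)) / (1 - (r : ℂ) * z))
    (G : ℂ → EuclideanSpace ℂ (Fin 2))
    (hGdef : ∀ z : ℂ, G z = (WithLp.equiv 2 (Fin 2 → ℂ)).symm
      ![((Real.sqrt 2 : ℂ))⁻¹ * z ^ 2, ((Real.sqrt 2 : ℂ))⁻¹ * (b z) ^ 2]) :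
    (∀ z ∈ ball (0 : ℂ) 1, ‖G z‖ < 1) ∧
    Set.InjOn G (ball (0 : ℂ) 1) ∧
    ∃ U : Set ℂ, IsOpen U ∧ closedBall (0 : ℂ) 1 ⊆ U ∧
      ∃ Gext : ℂ → EuclideanSpace ℂ (Fin 2),
        DifferentiableOn ℂ Gext U ∧
        (∀ z ∈ ball (0 : ℂ) 1, Gext z = G z) ∧
        Gext 1 = (WithLp.equiv 2 (Fin 2 → ℂ)).symm
          ![((Real.sqrt 2 : ℂ))⁻¹, ((Real.sqrt 2 : ℂ))⁻¹] ∧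
        Gext (-1) = (WithLp.equiv 2 (Fin 2 → ℂ)).symm
          ![((Real.sqrt 2 : ℂ))⁻¹, ((Real.sqrt 2 : ℂ))⁻¹] := by
  have hc : ((Real.sqrt 2 : ℂ))⁻¹ ≠ 0 := by
    simp only [ne_eq, inv_eq_zero, Complex.ofReal_eq_zero]
    positivity
  -- denominator nonzero on closed ball
  have hden : ∀ z : ℂ, ‖z‖ ≤ 1 → (1 : ℂ) - (r : ℂ) * z ≠ 0 := by
    intro z hz h
    have h1 : (1 : ℂ) = (r : ℂ) * z := sub_eq_zero.mp h
    have : (1 : ℝ) = ‖(r : ℂ) * z‖ := by rw [← h1]; simp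
    rw [norm_mul, Complex.norm_real, Real.norm_eq_abs, abs_of_pos hr0] at this
    nlinarith
  -- |b z| < 1 on the open disc
  have hb1 : ∀ z : ℂ, ‖z‖ < 1 → ‖b z‖ < 1 := by
    intro z hz
    rw [hbdef]
    rw [norm_div]
    have hd := hden z hz.le
    have hdpos : 0 < ‖(1 : ℂ) - (r : ℂ) * z‖ := norm_pos_iff.mpr hd
    rw [div_lt_one hdpos]
    have key : ‖z - (r : ℂ)‖ ^ 2 < ‖(1 : ℂ) - (r : ℂ) * z‖ ^ 2 := by
      have e1 : ‖z - (r : ℂ)‖ ^ 2 = Complex.normSq (z - (r : ℂ)) := by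
        rw [← Complex.sq_norm]
      have e2 : ‖(1 : ℂ) - (r : ℂ) * z‖ ^ 2 = Complex.normSq ((1 : ℂ) - (r : ℂ) * z) := by
        rw [← Complex.sq_norm]
      have hz2 : z.re ^ 2 + z.im ^ 2 < 1 := by
        have : ‖z‖ ^ 2 < 1 := by nlinarith [norm_nonneg z]
        have e3 : ‖z‖ ^ 2 = Complex.normSq z := by rw [← Complex.sq_norm]
        rw [e3, Complex.normSq_apply] at this
        nlinarith
      rw [e1, e2]
      simp only [Complex.normSq_apply, Complex.sub_re, Complex.sub_im, Complex.mul_re,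
        Complex.mul_im, Complex.ofReal_re, Complex.ofReal_im, Complex.one_re, Complex.one_im]
      have hp : (0:ℝ) < (1 - r ^ 2) * (1 - (z.re ^ 2 + z.im ^ 2)) :=
        mul_pos (by nlinarith) (by linarith)
      nlinarith [hp]
    nlinarith [norm_nonneg (z - (r : ℂ))]
  -- coordinate extraction
  have hcoord : ∀ z : ℂ, ‖G z‖ = Real.sqrt ((((Real.sqrt 2))⁻¹ * ‖z‖ ^ 2) ^ 2
      + (((Real.sqrt 2))⁻¹ * ‖b z‖ ^ 2) ^ 2) := by
    intro z
    rw [hGdef, EuclideanSpace.norm_eq]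
    congr 1
    rw [Fin.sum_univ_two]
    simp only [WithLp.equiv_symm_apply, WithLp.ofLp_toLp, Matrix.cons_val_zero, Matrix.cons_val_one,
      Matrix.head_cons, norm_mul, norm_pow, norm_inv, Complex.norm_real, Real.norm_eq_abs,
      abs_of_nonneg (Real.sqrt_nonneg 2)]
  refine ⟨?_, ?_, ?_⟩
  · -- (i)
    intro z hz
    rw [mem_ball, dist_zero_right] at hz
    rw [hcoord]
    have hb := hb1 z hz
    have h2 : (0:ℝ) < Real.sqrt 2 := by positivity
    have h2' : Real.sqrt 2 ^ 2 = 2 := Real.sq_sqrt (by norm_num)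
    rw [show (1:ℝ) = Real.sqrt 1 from (Real.sqrt_one).symm]
    apply Real.sqrt_lt_sqrt
    · positivity
    · have hz4 : ‖z‖ ^ 2 < 1 := by nlinarith [norm_nonneg z]
      have hb4 : ‖b z‖ ^ 2 < 1 := by nlinarith [norm_nonneg (b z)]
      have : ((Real.sqrt 2)⁻¹) ^ 2 = 1/2 := by
        rw [inv_pow, h2']; norm_num
      rw [mul_pow, mul_pow, this]
      nlinarith [sq_nonneg (‖z‖^2), sq_nonneg (‖b z‖^2)]
  · -- (ii) injectivity
    intro z hz w hw hG
    rw [mem_ball, dist_zero_right] at hz hw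
    rw [hGdef, hGdef] at hG
    have hvec := (WithLp.equiv 2 (Fin 2 → ℂ)).symm.injective hG
    have h0 := congrFun hvec 0
    have h1 := congrFun hvec 1
    simp only [Matrix.cons_val_zero, Matrix.cons_val_one, Matrix.head_cons] at h0 h1
    have hz2 : z ^ 2 = w ^ 2 := mul_left_cancel₀ hc h0
    have hb2 : b z ^ 2 = b w ^ 2 := mul_left_cancel₀ hc h1
    have hfac : (z - w) * (z + w) = 0 := by linear_combination hz2
    rcases mul_eq_zero.mp hfac with h | h
    · exact sub_eq_zero.mp h
    · -- z = -w
      have hzw : z = -w := by linear_combination h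
      rw [hbdef, hbdef, hzw] at hb2
      have hdw : (1 : ℂ) - (r : ℂ) * w ≠ 0 := hden w hw.le
      have hdw' : (1 : ℂ) - (r : ℂ) * (-w) ≠ 0 := by
        apply hden
        simpa using hw.le
      have hpoly : ((-w - (r : ℂ)) * ((1 : ℂ) - (r : ℂ) * w)) ^ 2
          = ((w - (r : ℂ)) * ((1 : ℂ) - (r : ℂ) * (-w))) ^ 2 := by
        rw [div_pow, div_pow] at hb2
        have := (div_eq_div_iff (pow_ne_zero 2 hdw') (pow_ne_zero 2 hdw)).mp hb2
        rw [mul_pow, mul_pow]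
        linear_combination this
      have hkey : ((r : ℂ) * w) * ((w : ℂ) ^ 2 - 1) * ((1 : ℂ) - (r : ℂ) ^ 2) = 0 := by
        linear_combination (-(1:ℂ)/4) * hpoly
      have hr2 : (1 : ℂ) - (r : ℂ) ^ 2 ≠ 0 := by
        intro h'
        have : (r : ℝ) ^ 2 = 1 := by
          have := sub_eq_zero.mp h'
          exact_mod_cast this.symm
        nlinarith
      have hw2 : (w : ℂ) ^ 2 - 1 ≠ 0 := by
        intro h'
        have : w ^ 2 = 1 := by linear_combination h'
        have : ‖w‖ ^ 2 = 1 := by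
          rw [← norm_pow, this, norm_one]
        nlinarith [norm_nonneg w, hw]
      have hrne : (r : ℂ) ≠ 0 := by
        simp only [ne_eq, Complex.ofReal_eq_zero]
        exact hr0.ne'
      have hw0 : w = 0 := by
        rcases mul_eq_zero.mp hkey with h' | h'
        · rcases mul_eq_zero.mp h' with h'' | h''
          · rcases mul_eq_zero.mp h'' with h3 | h3
            · exact absurd h3 hrne
            · exact h3
          · exact absurd h'' hw2
        · exact absurd h' hr2
      rw [hzw, hw0, neg_zero]
  · -- (iii) extension
    refine ⟨{z : ℂ | (1 : ℂ) - (r : ℂ) * z ≠ 0}, ?_, ?_, G, ?_, fun z _ => rfl, ?_, ?_⟩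
    · have : {z : ℂ | (1 : ℂ) - (r : ℂ) * z ≠ 0}
          = (fun z : ℂ => (1 : ℂ) - (r : ℂ) * z) ⁻¹' {0}ᶜ := rfl
      rw [this]
      exact (isOpen_compl_singleton).preimage (by continuity)
    · intro z hz
      rw [mem_closedBall, dist_zero_right] at hz
      exact hden z hz
    · have hGeq : G = fun z => (PiLp.continuousLinearEquiv 2 ℂ (fun _ : Fin 2 => ℂ)).symm
          ![((Real.sqrt 2 : ℂ))⁻¹ * z ^ 2, ((Real.sqrt 2 : ℂ))⁻¹ * (b z) ^ 2] := by
        funext z; exact hGdef z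
      rw [hGeq]
      have hf : DifferentiableOn ℂ (fun z : ℂ =>
          ![((Real.sqrt 2 : ℂ))⁻¹ * z ^ 2, ((Real.sqrt 2 : ℂ))⁻¹ * (b z) ^ 2])
          {z : ℂ | (1 : ℂ) - (r : ℂ) * z ≠ 0} := by
        rw [differentiableOn_pi]
        intro i
        fin_cases i
        · simp only [Matrix.cons_val_zero]
          exact (differentiableOn_const _).mul (differentiableOn_pow 2)
        · simp only [Matrix.cons_val_one, Matrix.head_cons]
          apply DifferentiableOn.mul (differentiableOn_const _)
          apply DifferentiableOn.pow
          have heq : Set.EqOn b (fun z => (z - (r : ℂ)) / (1 - (r : ℂ) * z))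
              {z : ℂ | (1 : ℂ) - (r : ℂ) * z ≠ 0} := fun z _ => hbdef z
          apply DifferentiableOn.congr _ heq
          apply DifferentiableOn.div
          · exact (differentiableOn_id).sub (differentiableOn_const _)
          · exact (differentiableOn_const _).sub
              ((differentiableOn_const _).mul differentiableOn_id)
          · intro z hz; exact hz
      exact (PiLp.continuousLinearEquiv 2 ℂ (fun _ : Fin 2 => ℂ)).symm.differentiable.comp_differentiableOn hf
    · rw [hGdef]
      congr 1
      have hb1' : b 1 = 1 := by
        rw [hbdef, div_eq_iff (hden 1 (by simp))]
        ring
      rw [hb1']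
      norm_num
    · rw [hGdef]
      congr 1
      have hbm1 : b (-1) = -1 := by
        rw [hbdef, div_eq_iff (hden (-1) (by simp))]
        ring
      rw [hbm1]
      norm_num
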